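/- Let a density matrix ρ satisfy tr(M_g ρ M_g†) = cos²φ_n and ⟨n|ρ|n⟩ > 0, and suppose moreover that tr(M_g·(M_g ρ M_g†/tr(M_g ρ M_g†))·M_g†) = cos²φ_n (invariance under the jump to g). If the spectrum of M_g² is non-degenerate, then ρ = |n⟩⟨n|. -/

import Mathlib

open Matrix
open scoped ComplexOrder

/-- Invariance under the jump to `g`, together with `⟨n|ρ|n⟩ > 0`, forces
`ρ = |n⟩⟨n|` when `M_g²` has a non-degenerate spectrum. -/
theorem stmt8 (nmax : ℕ) (φ₀ ϑ : ℝ)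
    (Mg : Matrix (Fin (nmax + 1)) (Fin (nmax + 1)) ℂ)
    (hMg : Mg = Matrix.diagonal fun m : Fin (nmax + 1) =>
      (Real.cos (φ₀ + ϑ * (m : ℕ)) : ℂ))
    (hg : IsUnit Mg)
    (hspec : ∀ m m' : Fin (nmax + 1),
      Real.cos (φ₀ + ϑ * (m : ℕ)) ^ 2 = Real.cos (φ₀ + ϑ * (m' : ℕ)) ^ 2 → m = m')
    (ρ : Matrix (Fin (nmax + 1)) (Fin (nmax + 1)) ℂ)
    (hρ : ρ.PosSemidef) (hρtr : ρ.trace = 1)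
    (n : Fin (nmax + 1)) (φn : ℝ) (hφn : φn = φ₀ + ϑ * (n : ℕ))
    (hn : 0 < (ρ n n).re)
    (h1 : (Mg * ρ * Mgᴴ).trace = (Real.cos φn ^ 2 : ℝ))
    (h2 : (Mg * (((Mg * ρ * Mgᴴ).trace)⁻¹ • (Mg * ρ * Mgᴴ)) * Mgᴴ).trace
      = (Real.cos φn ^ 2 : ℝ)) :
    ρ = Matrix.single n n 1 := by
  set c : Fin (nmax + 1) → ℝ := fun m => Real.cos (φ₀ + ϑ * (m : ℕ)) with hc
  set d : Fin (nmax + 1) → ℂ := fun m => (c m : ℂ) with hd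
  have hMgd : Mg = Matrix.diagonal d := hMg
  have hsd : star d = d := by funext i; simp [hd]
  have hconj : (Matrix.diagonal d)ᴴ = Matrix.diagonal d := by
    rw [Matrix.diagonal_conjTranspose]
    exact congrArg _ hsd
  -- key trace computation
  have key : ∀ A : Matrix (Fin (nmax + 1)) (Fin (nmax + 1)) ℂ,
      (Matrix.diagonal d * A * (Matrix.diagonal d)ᴴ).trace = ∑ i, d i ^ 2 * A i i := by
    intro A
    rw [hconj, Matrix.trace]
    refine Finset.sum_congr rfl fun i _ => ?_
    rw [Matrix.diag_apply, Matrix.mul_diagonal, Matrix.diagonal_mul]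
    ring
  -- entry computation
  have hXii : ∀ i, (Matrix.diagonal d * ρ * (Matrix.diagonal d)ᴴ) i i = d i ^ 2 * ρ i i := by
    intro i
    rw [hconj, Matrix.mul_diagonal, Matrix.diagonal_mul]
    ring
  -- all diagonal entries of Mg are nonzero
  have hdn : ∀ m, d m ≠ 0 := by
    intro m
    have hdet := (Matrix.isUnit_iff_isUnit_det _).mp hg
    rw [hMgd, Matrix.det_diagonal, isUnit_iff_ne_zero] at hdet
    exact fun h => hdet (Finset.prod_eq_zero (Finset.mem_univ m) h)
  -- diagonal entries are real
  have hreal : ∀ i, ρ i i = ((ρ i i).re : ℂ) := by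
    intro i
    have h := congrFun (congrFun hρ.isHermitian i) i
    rw [Matrix.conjTranspose_apply] at h
    exact (Complex.conj_eq_iff_re.mp h).symm
  set p : Fin (nmax + 1) → ℝ := fun i => (ρ i i).re with hp
  have hxone : ∀ i : Fin (nmax + 1),
      star (Pi.single i (1:ℂ)) ⬝ᵥ ρ *ᵥ Pi.single i (1:ℂ) = ρ i i := by
    intro i
    simp [Matrix.mulVec_single, dotProduct, Pi.single_apply, apply_ite (star : ℂ → ℂ)]
  have hpnn : ∀ i, 0 ≤ p i := by
    intro i
    have h := hρ.re_dotProduct_nonneg (Pi.single i (1:ℂ))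
    rw [hxone i] at h
    simpa [hp] using h
  have htrval : (Mg * ρ * Mgᴴ).trace = ((c n ^ 2 : ℝ) : ℂ) := by
    rw [h1, hφn]
  have htrne : (Mg * ρ * Mgᴴ).trace ≠ 0 := by
    rw [htrval]
    have hcnne : c n ≠ 0 := by
      intro h; exact hdn n (by rw [hd]; simp [h])
    have : (0:ℝ) < c n ^ 2 := by positivity
    exact_mod_cast ne_of_gt (by exact_mod_cast this)
  -- first moment equation
  have e1 : ∑ i, c i ^ 2 * p i = c n ^ 2 := by
    have hA : ((∑ i, c i ^ 2 * p i : ℝ) : ℂ) = ((c n ^ 2 : ℝ) : ℂ) := by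
      rw [← htrval, hMgd, key]
      push_cast
      refine Finset.sum_congr rfl fun i _ => ?_
      rw [hreal i]
      try simp only [hp, hd]
      try push_cast
      try ring
    exact_mod_cast hA
  -- second moment equation
  have hT : (Mg * (Mg * ρ * Mgᴴ) * Mgᴴ).trace
      = (Mg * ρ * Mgᴴ).trace * ((Real.cos φn ^ 2 : ℝ) : ℂ) := by
    have h2' := h2
    rw [Matrix.mul_smul, Matrix.smul_mul, Matrix.trace_smul, smul_eq_mul,
      inv_mul_eq_div, div_eq_iff htrne] at h2'
    rw [h2', mul_comm]
  have e2 : ∑ i, c i ^ 4 * p i = c n ^ 4 := by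
    have htrval' := htrval
    rw [hMgd] at htrval'
    rw [hMgd, key, htrval', hφn] at hT
    have hA : ((∑ i, c i ^ 4 * p i : ℝ) : ℂ) = ((c n ^ 4 : ℝ) : ℂ) := by
      push_cast
      calc (∑ i, (c i : ℂ) ^ 4 * (p i : ℂ))
          = ∑ i, d i ^ 2 * ((Matrix.diagonal d * ρ * (Matrix.diagonal d)ᴴ) i i) := by
            refine Finset.sum_congr rfl fun i _ => ?_
            rw [hXii i, hreal i]
            try simp only [hp, hd]
            try push_cast
            try ring
        _ = ((c n ^ 2 : ℝ) : ℂ) * ((Real.cos (φ₀ + ϑ * (n : ℕ)) ^ 2 : ℝ) : ℂ) := hT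
        _ = (c n : ℂ) ^ 4 := by
            simp only [hc]
            push_cast
            ring
    exact_mod_cast hA
  -- zeroth moment
  have e0 : ∑ i, p i = 1 := by
    have hA : ∑ i, ((p i : ℝ) : ℂ) = (1 : ℂ) := by
      rw [← hρtr, Matrix.trace]
      refine Finset.sum_congr rfl fun i _ => ?_
      rw [Matrix.diag_apply, hreal i]
    exact_mod_cast hA
  -- sum of squares vanishes
  have esq : ∑ i, (c i ^ 2 - c n ^ 2) ^ 2 * p i = 0 := by
    have hexp : ∑ i, (c i ^ 2 - c n ^ 2) ^ 2 * p i
        = (∑ i, c i ^ 4 * p i) - 2 * c n ^ 2 * (∑ i, c i ^ 2 * p i)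
          + c n ^ 4 * (∑ i, p i) := by
      rw [Finset.mul_sum, Finset.mul_sum, ← Finset.sum_sub_distrib, ← Finset.sum_add_distrib]
      exact Finset.sum_congr rfl fun i _ => by ring
    rw [hexp, e0, e1, e2]; ring
  have hzero : ∀ i, i ≠ n → p i = 0 := by
    intro i hi
    have hterm := (Finset.sum_eq_zero_iff_of_nonneg (fun j _ =>
      mul_nonneg (sq_nonneg _) (hpnn j))).mp esq i (Finset.mem_univ i)
    have hne : (c i ^ 2 - c n ^ 2) ≠ 0 := by
      intro h
      exact hi (hspec i n (sub_eq_zero.mp h))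
    rcases mul_eq_zero.mp hterm with h | h
    · exact absurd (pow_eq_zero_iff (n := 2) (by norm_num) |>.mp h) hne
    · exact h
  have hdiag0 : ∀ i, i ≠ n → ρ i i = 0 := by
    intro i hi
    have h := hzero i hi
    simp only [hp] at h
    rw [hreal i, h]
    simp
  -- off-diagonal entries vanish
  have hcol : ∀ i, i ≠ n → ∀ j, ρ j i = 0 := by
    intro i hi j
    have h0 : star (Pi.single i (1:ℂ)) ⬝ᵥ ρ *ᵥ Pi.single i (1:ℂ) = 0 := by
      rw [hxone i, hdiag0 i hi]
    have hmv := (hρ.dotProduct_mulVec_zero_iff (Pi.single i (1:ℂ))).mp h0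
    have := congrFun hmv j
    simpa using this
  have hrow : ∀ i, i ≠ n → ∀ j, ρ i j = 0 := by
    intro i hi j
    have hh := congrFun (congrFun hρ.isHermitian i) j
    rw [Matrix.conjTranspose_apply] at hh
    rw [← hh, hcol i hi j, star_zero]
  have hnn : ρ n n = 1 := by
    have htr : ρ.trace = ρ n n := by
      rw [Matrix.trace]
      exact Finset.sum_eq_single n (fun i _ hi => hdiag0 i hi) (by simp)
    rw [← htr, hρtr]
  ext i j
  by_cases hj : j = n
  · by_cases hi : i = n
    · rw [hi, hj, hnn]
      simp [Matrix.single]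
    · rw [hrow i hi j]
      simp only [Matrix.single, Matrix.of_apply]
      exact (if_neg fun h => hi h.1.symm).symm
  · rw [hcol j hj i]
    simp only [Matrix.single, Matrix.of_apply]
    exact (if_neg fun h => hj h.2.symm).symm
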